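/- Let X be a Hausdorff topological space containing an uncountable closed discrete subspace of cardinality ℵ₁. Then the compact metrizable-into-ω₁ product (ω₁ + 1)^{ω} embeds topologically into (CL(X), τ_F), the hyperspace of nonempty closed subsets of X with the Fell topology. -/

import Mathlib

/-- The hyperspace of nonempty closed subsets of `X`. -/
def CL (X : Type*) [TopologicalSpace X] : Type _ := {A : Set X // A.Nonempty ∧ IsClosed A}

/-- The Fell topology on `CL X`, generated by the subbase of sets
`U⁻ = {A : A ∩ U ≠ ∅}` for `U` open, and `(Kᶜ)⁺ = {A : A ∩ K = ∅}` for `K` compact. -/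
def FellTopology (X : Type*) [TopologicalSpace X] : TopologicalSpace (CL X) :=
  TopologicalSpace.generateFrom
    ({S | ∃ U : Set X, IsOpen U ∧ S = {A : CL X | (A.1 ∩ U).Nonempty}} ∪
     {S | ∃ K : Set X, IsCompact K ∧ S = {A : CL X | A.1 ∩ K = ∅}})

open Set Topology

universe u v

theorem stmt_6_aux {X : Type u} [TopologicalSpace X] [T2Space X]
    (D : Set X) (hDcl : IsClosed D) (hDdisc : DiscreteTopology D)
    (hcard : Cardinal.mk D = Cardinal.aleph 1) :
    ∃ f : (ℕ → Set.Iic (Cardinal.aleph.{v} 1).ord) → CL X,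
      @Topology.IsEmbedding _ _ _ (FellTopology X) f := by
  classical
  letI : TopologicalSpace (CL X) := FellTopology X
  set o : Ordinal.{v} := (Cardinal.aleph.{v} 1).ord with ho
  -- An injection from our index type into `D`.
  obtain ⟨ι⟩ : Nonempty (Option (ℕ × Set.Iio o) ↪ D) := by
    apply (Cardinal.lift_mk_le'.{v+1, u}).mp
    have h1 : Cardinal.mk (Set.Iio o) = Cardinal.lift.{v+1} (Cardinal.aleph.{v} 1) := by
      rw [ho, Ordinal.mk_Iio_ordinal, Cardinal.card_ord]
    rw [hcard]
    rw [Cardinal.mk_option, Cardinal.mk_prod, h1]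
    simp only [Cardinal.lift_lift, Cardinal.mk_denumerable, Cardinal.lift_aleph0,
      Cardinal.lift_add, Cardinal.lift_mul, Cardinal.lift_one, Cardinal.lift_aleph,
      Ordinal.lift_one]
    rw [Cardinal.aleph0_mul_eq (Cardinal.aleph0_le_aleph 1)]
    exact (Cardinal.add_one_of_aleph0_le (Cardinal.aleph0_le_aleph 1)).le
  -- The points of `X` indexed by our index type.
  let p : Option (ℕ × Set.Iio o) → X := fun s => (ι s : X)
  have hpD : ∀ s, p s ∈ D := fun s => (ι s).2
  have hpinj : Function.Injective p := fun a b h => ι.injective (Subtype.ext h)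
  -- Every subset of `D` is closed in `X`.
  have hclosed : ∀ A : Set X, A ⊆ D → IsClosed A := by
    intro A hA
    have hA' : A = Subtype.val '' ((Subtype.val : D → X) ⁻¹' A) := by
      rw [Set.image_preimage_eq_inter_range, Subtype.range_val]
      exact (Set.inter_eq_left.mpr hA).symm
    rw [hA']
    exact hDcl.isClosedEmbedding_subtypeVal.isClosedMap _ (isClosed_discrete _)
  -- The underlying set of the embedding.
  let F : (ℕ → Set.Iic o) → Set X := fun x =>
    {d | d = p none ∨ ∃ q : ℕ × Set.Iio o, ((q.2 : Ordinal) < (x q.1 : Ordinal)) ∧ d = p (some q)}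
  have hFD : ∀ x, F x ⊆ D := by
    rintro x d (rfl | ⟨q, _, rfl⟩) <;> exact hpD _
  have hmems : ∀ x q, p (some q) ∈ F x ↔ (q.2 : Ordinal) < (x q.1 : Ordinal) := by
    intro x q
    constructor
    · rintro (h | ⟨q', hq', h⟩)
      · exact absurd (hpinj h) (by simp)
      · have : q = q' := by
          have := hpinj h
          exact Option.some_injective _ this
        rwa [this]
    · intro h
      exact Or.inr ⟨q, h, rfl⟩
  -- The embedding into `CL X`.
  let f : (ℕ → Set.Iic o) → CL X := fun x =>
    ⟨F x, ⟨p none, Or.inl rfl⟩, hclosed _ (hFD x)⟩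
  have hf1 : ∀ x, (f x).1 = F x := fun _ => rfl
  -- Injectivity.
  have key : ∀ x y : ℕ → Set.Iic o, F x = F y → ∀ n, ¬ ((x n : Ordinal) < (y n : Ordinal)) := by
    intro x y hF n hlt
    have hβ : (x n : Ordinal) < o := lt_of_lt_of_le hlt (y n).2
    have h1 : p (some (n, ⟨(x n : Ordinal), hβ⟩)) ∈ F y := (hmems y _).mpr hlt
    rw [← hF] at h1
    exact absurd ((hmems x _).mp h1) (lt_irrefl _)
  have hfinj : Function.Injective f := by
    intro x y hxy
    have hF : F x = F y := congrArg Subtype.val hxy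
    funext n
    exact Subtype.ext (le_antisymm (not_lt.mp (key y x hF.symm n)) (not_lt.mp (key x y hF n)))
  -- Openness of coordinate conditions.
  have hccoord : ∀ (n : ℕ) (β : Ordinal), IsOpen {x : ℕ → Set.Iic o | β < (x n : Ordinal)} := by
    intro n β
    have h1 : IsOpen {γ : Set.Iic o | β < (γ : Ordinal)} :=
      (isOpen_Ioi (a := β)).preimage continuous_subtype_val
    have h2 : {x : ℕ → Set.Iic o | β < (x n : Ordinal)}
        = (fun x : ℕ → Set.Iic o => x n) ⁻¹' {γ : Set.Iic o | β < (γ : Ordinal)} := rfl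
    rw [h2]
    exact h1.preimage (continuous_apply n)
  have hccoord' : ∀ (n : ℕ) (β : Ordinal), IsOpen {x : ℕ → Set.Iic o | (x n : Ordinal) ≤ β} := by
    intro n β
    have h1 : IsOpen {γ : Set.Iic o | (γ : Ordinal) ≤ β} := by
      have h2 : {γ : Set.Iic o | (γ : Ordinal) ≤ β}
          = Subtype.val ⁻¹' (Set.Iio (Order.succ β)) := by
        ext γ
        simp [Order.lt_succ_iff]
      rw [h2]
      exact isOpen_Iio.preimage continuous_subtype_val
    have h3 : {x : ℕ → Set.Iic o | (x n : Ordinal) ≤ β}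
        = (fun x : ℕ → Set.Iic o => x n) ⁻¹' {γ : Set.Iic o | (γ : Ordinal) ≤ β} := rfl
    rw [h3]
    exact h1.preimage (continuous_apply n)
  have hconst : ∀ P : Prop, IsOpen {x : ℕ → Set.Iic o | P} := by
    intro P
    by_cases h : P
    · simp only [h, Set.setOf_true]; exact isOpen_univ
    · simp only [h, Set.setOf_false]; exact isOpen_empty
  -- Continuity of `f`.
  have hfc : Continuous f := by
    refine continuous_generateFrom_iff.mpr ?_
    rintro V (⟨U, hU, rfl⟩ | ⟨K, hK, rfl⟩)
    · -- hit sets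
      have heq : f ⁻¹' {A : CL X | (A.1 ∩ U).Nonempty} =
          {x | p none ∈ U} ∪
            ⋃ (q : ℕ × Set.Iio o) (_ : p (some q) ∈ U),
              {x : ℕ → Set.Iic o | (q.2 : Ordinal) < (x q.1 : Ordinal)} := by
        ext x
        simp only [Set.mem_preimage, Set.mem_setOf_eq, Set.mem_union, Set.mem_iUnion, hf1]
        constructor
        · rintro ⟨d, hdF, hdU⟩
          rcases hdF with rfl | ⟨q, hq, rfl⟩
          · exact Or.inl hdU
          · exact Or.inr ⟨q, hdU, hq⟩
        · rintro (h | ⟨q, hqU, hqlt⟩)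
          · exact ⟨p none, Or.inl rfl, h⟩
          · exact ⟨p (some q), Or.inr ⟨q, hqlt, rfl⟩, hqU⟩
      rw [heq]
      exact (hconst _).union
        (isOpen_iUnion fun q => isOpen_iUnion fun _ => hccoord q.1 q.2)
    · -- miss sets
      have hKD : (K ∩ D).Finite := by
        have : DiscreteTopology ↥(K ∩ D) :=
          DiscreteTopology.of_subset hDdisc Set.inter_subset_right
        exact (hK.inter_right hDcl).finite (isDiscrete_iff_discreteTopology.mpr this)
      have hTfin : {q : ℕ × Set.Iio o | p (some q) ∈ K}.Finite := by
        have hsub : {q : ℕ × Set.Iio o | p (some q) ∈ K}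
            ⊆ (fun q : ℕ × Set.Iio o => p (some q)) ⁻¹' (K ∩ D) :=
          fun q hq => ⟨hq, hpD _⟩
        refine (hKD.preimage ?_).subset hsub
        exact fun a _ b _ h => Option.some_injective _ (hpinj h)
      have heq : f ⁻¹' {A : CL X | A.1 ∩ K = ∅} =
          {x : ℕ → Set.Iic o | p none ∉ K} ∩
            ⋂ q ∈ {q : ℕ × Set.Iio o | p (some q) ∈ K},
              {x : ℕ → Set.Iic o | (x q.1 : Ordinal) ≤ (q.2 : Ordinal)} := by
        ext x
        simp only [Set.mem_preimage, Set.mem_setOf_eq, Set.mem_inter_iff, Set.mem_iInter, hf1]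
        constructor
        · intro h
          rw [Set.eq_empty_iff_forall_notMem] at h
          refine ⟨fun hin => h (p none) ⟨Or.inl rfl, hin⟩, ?_⟩
          intro q hq
          by_contra hlt
          push_neg at hlt
          exact h (p (some q)) ⟨Or.inr ⟨q, hlt, rfl⟩, hq⟩
        · rintro ⟨h0, h1⟩
          rw [Set.eq_empty_iff_forall_notMem]
          rintro d ⟨hdF, hdK⟩
          rcases hdF with rfl | ⟨q, hq, rfl⟩
          · exact h0 hdK
          · exact absurd hq (not_lt.mpr (h1 q hdK))
      rw [heq]
      exact (hconst _).inter (hTfin.isOpen_biInter fun q _ => hccoord' q.1 q.2)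
  -- The range of `f` is Hausdorff.
  have hsubD : ∀ c : ↥(Set.range f), (c : CL X).1 ⊆ D := by
    rintro ⟨c, x, rfl⟩
    exact hFD x
  haveI hT2 : T2Space ↥(Set.range f) := by
    have key2 : ∀ a b : ↥(Set.range f), ∀ d : X, d ∈ (a : CL X).1 → d ∉ (b : CL X).1 →
        ∃ u v : Set ↥(Set.range f),
          IsOpen u ∧ IsOpen v ∧ a ∈ u ∧ b ∈ v ∧ Disjoint u v := by
      intro a b d hda hdb
      have hdD : d ∈ D := hsubD a hda
      obtain ⟨U, hU, hUd⟩ : ∃ U : Set X, IsOpen U ∧ U ∩ D = {d} := by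
        have h1 : IsOpen {y : D | y = ⟨d, hdD⟩} := isOpen_discrete _
        rw [isOpen_induced_iff] at h1
        obtain ⟨U, hU, hUeq⟩ := h1
        refine ⟨U, hU, ?_⟩
        ext y
        constructor
        · rintro ⟨hyU, hyD⟩
          have h2 : (⟨y, hyD⟩ : D) ∈ Subtype.val ⁻¹' U := hyU
          rw [hUeq] at h2
          simpa using congrArg Subtype.val h2
        · intro hy
          rw [Set.mem_singleton_iff] at hy
          rw [hy]
          have h2 : (⟨d, hdD⟩ : D) ∈ Subtype.val ⁻¹' U := by rw [hUeq]; rfl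
          exact ⟨h2, hdD⟩
      have hdU : d ∈ U := by
        have : d ∈ U ∩ D := hUd ▸ rfl
        exact this.1
      have hV1 : IsOpen {A : CL X | (A.1 ∩ U).Nonempty} :=
        TopologicalSpace.isOpen_generateFrom_of_mem (Or.inl ⟨U, hU, rfl⟩)
      have hV2 : IsOpen {A : CL X | A.1 ∩ ({d} : Set X) = ∅} :=
        TopologicalSpace.isOpen_generateFrom_of_mem
          (Or.inr ⟨{d}, isCompact_singleton, rfl⟩)
      refine ⟨Subtype.val ⁻¹' {A : CL X | (A.1 ∩ U).Nonempty},
        Subtype.val ⁻¹' {A : CL X | A.1 ∩ ({d} : Set X) = ∅},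
        hV1.preimage continuous_subtype_val, hV2.preimage continuous_subtype_val,
        ⟨d, hda, hdU⟩, ?_, ?_⟩
      · show (b : CL X).1 ∩ ({d} : Set X) = ∅
        rw [Set.eq_empty_iff_forall_notMem]
        rintro e ⟨heb, rfl⟩
        exact hdb heb
      · rw [Set.disjoint_left]
        rintro c ⟨e, hec, heU⟩ hc2
        have heD : e ∈ D := hsubD c hec
        have : e ∈ ({d} : Set X) := hUd ▸ (⟨heU, heD⟩ : e ∈ U ∩ D)
        rw [this] at hec
        have : d ∈ (c : CL X).1 ∩ ({d} : Set X) := ⟨hec, rfl⟩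
        rw [show (c : CL X).1 ∩ ({d} : Set X) = ∅ from hc2] at this
        exact this
    constructor
    intro a b hab
    have hsets : (a : CL X).1 ≠ (b : CL X).1 := by
      intro h
      exact hab (Subtype.ext (Subtype.ext h))
    have hd : ∃ d : X, (d ∈ (a : CL X).1 ∧ d ∉ (b : CL X).1) ∨
        (d ∈ (b : CL X).1 ∧ d ∉ (a : CL X).1) := by
      by_contra h
      push_neg at h
      apply hsets
      ext d
      have := h d
      tauto
    obtain ⟨d, ⟨h1, h2⟩ | ⟨h1, h2⟩⟩ := hd
    · exact key2 a b d h1 h2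
    · obtain ⟨u, v, hu, hv, hbu, hav, hdis⟩ := key2 b a d h1 h2
      exact ⟨v, u, hv, hu, hav, hbu, hdis.symm⟩
  -- The source is compact.
  haveI : CompactSpace (Set.Iic o) := by
    rw [← isCompact_iff_compactSpace, ← Set.Icc_bot]
    exact isCompact_Icc
  have h1 : Continuous (Set.rangeFactorization f) := hfc.subtype_mk _
  have h2 : Function.Injective (Set.rangeFactorization f) := fun x y h =>
    hfinj (congrArg Subtype.val h)
  have h3 : Topology.IsEmbedding (Set.rangeFactorization f) :=
    (h1.isClosedEmbedding h2).toIsEmbedding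
  refine ⟨f, ?_⟩
  have h4 := Topology.IsEmbedding.subtypeVal.comp h3
  rwa [Set.coe_comp_rangeFactorization] at h4

/-- If a Hausdorff space `X` contains a closed discrete subspace of cardinality `ℵ₁`,
then `(ω₁ + 1)^{ω}` embeds into `(CL X, τ_F)`. -/
theorem stmt_6 {X : Type*} [TopologicalSpace X] [T2Space X]
    (D : Set X) (hDcl : IsClosed D) (hDdisc : DiscreteTopology D)
    (hcard : Cardinal.mk D = Cardinal.aleph 1) :
    ∃ f : (ℕ → Set.Iic (Cardinal.aleph 1).ord) → CL X,
      @Topology.IsEmbedding _ _ _ (FellTopology X) f :=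
  stmt_6_aux D hDcl hDdisc hcard
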